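/- For every integer n \ge 2 and every real \varphi with 0 \le \varphi < \pi/3, one has \int_1^\infty t^{-3} (1 + t\cos\varphi / n)^{-(n+1)} dt \le (1/\cos\varphi) (1 + \cos\varphi/n)^{-n} \le 1/\cos\varphi. -/

import Mathlib

open Real MeasureTheory

/-- For every integer `n ≥ 2` and real `φ` with `0 ≤ φ < π/3`, one has
`∫₁^∞ t⁻³ (1 + t cos φ / n)^{-(n+1)} dt ≤ (1/cos φ)(1 + cos φ/n)^{-n} ≤ 1/cos φ`. -/
theorem stmt_5 :
    ∀ (n : ℕ), 2 ≤ n → ∀ φ : ℝ, 0 ≤ φ → φ < Real.pi / 3 →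
      (∫ t in Set.Ioi (1 : ℝ),
          t ^ (-3 : ℤ) * (1 + t * Real.cos φ / n) ^ (-((n : ℤ) + 1)))
        ≤ (1 / Real.cos φ) * (1 + Real.cos φ / n) ^ (-(n : ℤ)) ∧
      (1 / Real.cos φ) * (1 + Real.cos φ / n) ^ (-(n : ℤ)) ≤ 1 / Real.cos φ := by
  intro n hn φ hφ0 hφ1
  have hπ := Real.pi_pos
  have hc : 0 < Real.cos φ := by
    apply Real.cos_pos_of_mem_Ioo
    constructor <;> [linarith; linarith]
  set c := Real.cos φ with hcdef
  have hnR : (0:ℝ) < n := by exact_mod_cast Nat.pos_of_ne_zero (by omega)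
  have hbase : ∀ x : ℝ, 0 ≤ x → (0:ℝ) < 1 + x * c / n := fun x hx => by positivity
  -- derivative
  have hderiv : ∀ x ∈ Set.Ici (1:ℝ),
      HasDerivAt (fun x : ℝ => -(1/c) * (1 + x * c / n) ^ (-(n:ℤ)))
        ((1 + x * c / n) ^ (-((n:ℤ)+1))) x := by
    intro x hx
    have hx0 : (0:ℝ) ≤ x := le_trans zero_le_one hx
    have hne : (1 + x * c / n) ≠ 0 := ne_of_gt (hbase x hx0)
    have hu : HasDerivAt (fun x : ℝ => 1 + x * c / n) (c / n) x := by
      simpa [mul_div_assoc] using ((hasDerivAt_id x).mul_const (c / n)).const_add 1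
    have h2 := (hasDerivAt_zpow (-(n:ℤ)) _ (Or.inl hne)).comp x hu
    have h3 := h2.const_mul (-(1/c))
    refine h3.congr_deriv ?_
    rw [show (-(n:ℤ) - 1) = (-((n:ℤ)+1)) from by ring]
    push_cast
    field_simp
  have hpos : ∀ x ∈ Set.Ioi (1:ℝ), (0:ℝ) ≤ (1 + x * c / n) ^ (-((n:ℤ)+1)) := by
    intro x hx
    have := hbase x (le_of_lt (lt_trans one_pos hx))
    positivity
  have htend : Filter.Tendsto (fun x : ℝ => -(1/c) * (1 + x * c / n) ^ (-(n:ℤ)))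
      Filter.atTop (nhds 0) := by
    have h1 : Filter.Tendsto (fun x : ℝ => 1 + x * c / n) Filter.atTop Filter.atTop := by
      apply Filter.tendsto_atTop_add_const_left
      simpa [mul_div_assoc] using
        Filter.Tendsto.atTop_mul_const (div_pos hc hnR) (Filter.tendsto_id (α := ℝ))
    have h2 : Filter.Tendsto (fun x : ℝ => (1 + x * c / n) ^ (-(n:ℤ))) Filter.atTop (nhds 0) := by
      have := (Filter.tendsto_pow_atTop (n := n) (by omega)).comp h1
      have h3 := (tendsto_inv_atTop_zero.comp this)
      refine h3.congr fun x => ?_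
      simp [zpow_neg, zpow_natCast, Function.comp]
    simpa using h2.const_mul (-(1/c))
  have hint := integral_Ioi_of_hasDerivAt_of_nonneg' hderiv hpos htend
  have hgint := integrableOn_Ioi_deriv_of_nonneg' hderiv hpos htend
  have hintval : (∫ x in Set.Ioi (1:ℝ), (1 + x * c / n) ^ (-((n:ℤ)+1)))
      = (1/c) * (1 + c / n) ^ (-(n:ℤ)) := by
    rw [hint]; ring_nf
  constructor
  · -- first inequality
    have hfmeas : AEStronglyMeasurable
        (fun t : ℝ => t ^ (-3:ℤ) * (1 + t * c / n) ^ (-((n:ℤ)+1)))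
        (volume.restrict (Set.Ioi (1:ℝ))) := by
      apply ContinuousOn.aestronglyMeasurable _ measurableSet_Ioi
      intro x hx
      have hx0 : x ≠ 0 := ne_of_gt (lt_trans one_pos hx)
      have hne : (1 + x * c / n) ≠ 0 := ne_of_gt (hbase x (le_of_lt (lt_trans one_pos hx)))
      apply ContinuousWithinAt.mul
      · exact (continuousAt_zpow₀ x (-3) (Or.inl hx0)).continuousWithinAt
      · exact ((by fun_prop : ContinuousAt (fun x : ℝ => 1 + x * c / n) x).zpow₀
          _ (Or.inl hne)).continuousWithinAt
    have hle : ∀ x ∈ Set.Ioi (1:ℝ),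
        x ^ (-3:ℤ) * (1 + x * c / n) ^ (-((n:ℤ)+1)) ≤ (1 + x * c / n) ^ (-((n:ℤ)+1)) := by
      intro x hx
      have hx1 : (1:ℝ) < x := hx
      have hg0 := hpos x hx
      have hb : x ^ (-3:ℤ) ≤ 1 := by
        rw [zpow_neg]
        apply inv_le_one_of_one_le₀
        exact one_le_zpow₀ hx1.le (by norm_num)
      calc x ^ (-3:ℤ) * (1 + x * c / n) ^ (-((n:ℤ)+1))
          ≤ 1 * (1 + x * c / n) ^ (-((n:ℤ)+1)) := by
            apply mul_le_mul_of_nonneg_right hb hg0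
        _ = _ := one_mul _
    have hf0 : ∀ x ∈ Set.Ioi (1:ℝ),
        0 ≤ x ^ (-3:ℤ) * (1 + x * c / n) ^ (-((n:ℤ)+1)) := by
      intro x hx
      have hx1 : (0:ℝ) < x := lt_trans one_pos hx
      have := hbase x hx1.le
      positivity
    have hfint : IntegrableOn (fun t : ℝ => t ^ (-3:ℤ) * (1 + t * c / n) ^ (-((n:ℤ)+1)))
        (Set.Ioi (1:ℝ)) := by
      apply Integrable.mono' hgint hfmeas
      filter_upwards [ae_restrict_mem measurableSet_Ioi] with x hx
      rw [Real.norm_eq_abs, abs_of_nonneg (hf0 x hx)]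
      exact hle x hx
    calc (∫ t in Set.Ioi (1:ℝ), t ^ (-3:ℤ) * (1 + t * c / n) ^ (-((n:ℤ)+1)))
        ≤ ∫ t in Set.Ioi (1:ℝ), (1 + t * c / n) ^ (-((n:ℤ)+1)) :=
          setIntegral_mono_on hfint hgint measurableSet_Ioi hle
      _ = (1/c) * (1 + c / n) ^ (-(n:ℤ)) := hintval
  · have h1 : (1:ℝ) ≤ 1 + c / n := by
      have : 0 ≤ c / n := by positivity
      linarith
    have h2 : (1 + c / n) ^ (-(n:ℤ)) ≤ 1 := by
      rw [zpow_neg, zpow_natCast]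
      exact inv_le_one_of_one_le₀ (one_le_pow₀ h1)
    calc (1/c) * (1 + c / n) ^ (-(n:ℤ)) ≤ (1/c) * 1 :=
          mul_le_mul_of_nonneg_left h2 (by positivity)
      _ = 1/c := mul_one _
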